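/- Let G and H be topological groups and f : G → H a continuous surjective group homomorphism. Then f is skeletal if and only if f is nearly open. -/

import Mathlib

open scoped Pointwise


/-- A continuous surjective homomorphism between topological groups
is skeletal iff it is nearly open. -/
theorem skeletal_iff_nearlyOpen_of_continuous_surjective_hom
    {G H : Type*} [Group G] [TopologicalSpace G] [IsTopologicalGroup G]
    [Group H] [TopologicalSpace H] [IsTopologicalGroup H]
    (f : G →* H) (hc : Continuous f) (hs : Function.Surjective f) :
    (∀ U : Set G, IsOpen U → U.Nonempty → (interior (closure (f '' U))).Nonempty) ↔
    (∀ U : Set G, IsOpen U → f '' U ⊆ interior (closure (f '' U))) := by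
  constructor
  · intro hsk U hU
    rintro _ ⟨x, hxU, rfl⟩
    -- x⁻¹ • U is a neighborhood of 1
    have hUo : IsOpen (x⁻¹ • U) := hU.smul _
    have h1mem : (1 : G) ∈ x⁻¹ • U := ⟨x, hxU, inv_mul_cancel x⟩
    obtain ⟨V, hV, hVsub⟩ := exists_nhds_split_inv (hUo.mem_nhds h1mem)
    set W : Set G := interior V with hW
    have hWo : IsOpen W := isOpen_interior
    have h1W : (1 : G) ∈ W := mem_interior_iff_mem_nhds.2 hV
    -- A = x • W is open nonempty
    set A : Set G := x • W with hA
    have hAo : IsOpen A := hWo.smul x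
    have hAne : A.Nonempty := ⟨x, 1, h1W, mul_one x⟩
    obtain ⟨h, hh⟩ := hsk A hAo hAne
    have hcl : h ∈ closure (f '' A) := interior_subset hh
    obtain ⟨p, hpI, hpA⟩ :=
      mem_closure_iff.1 hcl _ isOpen_interior hh
    obtain ⟨a, haA, rfl⟩ := hpA
    obtain ⟨v, hvW, rfl⟩ := haA
    -- translate by (f v)⁻¹
    set e : H ≃ₜ H := Homeomorph.mulRight ((f v)⁻¹) with he
    have hfx : f x = e (f (x • v)) := by
      simp [he, smul_eq_mul, map_mul, mul_assoc]
    have himg : f x ∈ e '' (interior (closure (f '' A))) :=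
      ⟨f (x • v), hpI, hfx.symm⟩
    have hopen : IsOpen (e '' (interior (closure (f '' A)))) :=
      e.isOpenMap _ isOpen_interior
    have hsubcl : e '' (interior (closure (f '' A))) ⊆ closure (f '' U) := by
      intro y hy
      obtain ⟨z, hz, rfl⟩ := hy
      have hz' : z ∈ closure (f '' A) := interior_subset hz
      have : e z ∈ e '' closure (f '' A) := ⟨z, hz', rfl⟩
      rw [e.image_closure] at this
      refine closure_mono ?_ this
      rintro _ ⟨_, ⟨b, hbA, rfl⟩, rfl⟩
      obtain ⟨w, hwW, rfl⟩ := hbA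
      have hmem : x * (w / v) ∈ U := by
        have := hVsub w (interior_subset hwW) v (interior_subset hvW)
        obtain ⟨u, huU, hu⟩ := this
        have hu' : x⁻¹ * u = w / v := hu
        have : u = x * (w / v) := inv_mul_eq_iff_eq_mul.1 hu'
        rw [← this]; exact huU
      refine ⟨x * (w / v), hmem, ?_⟩
      simp [he, smul_eq_mul, map_mul, map_div, div_eq_mul_inv, mul_assoc]
    exact interior_mono hsubcl (hopen.subset_interior_iff.2 subset_rfl himg)
  · intro hno U hU hne
    obtain ⟨x, hx⟩ := hne
    exact ⟨f x, hno U hU ⟨x, hx, rfl⟩⟩
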